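/- Let F be a (-2)-class and let D_1, D_2 be (-1)-classes with ⟨D_1, F⟩ = ⟨D_2, F⟩ = 1. Then ⟨D_1, D_2⟩ ≤ 1, with equality if and only if D_1 + D_2 = -K - F. Moreover, for each such D_1 there is a unique such D_2 with ⟨D_1, D_2⟩ = 1. -/
import Mathlib


/-- The intersection form of signature (1,7) on the Picard lattice `ℤ⁸`
of a degree-2 weak Del Pezzo surface. -/
def dpForm (x y : Fin 8 → ℤ) : ℤ :=
  x 0 * y 0 - ∑ i : Fin 7, x i.succ * y i.succ

/-- The canonical class `K = (-3, 1, 1, 1, 1, 1, 1, 1)`. -/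
def dpK : Fin 8 → ℤ := ![-3, 1, 1, 1, 1, 1, 1, 1]

/-- The basis classes `l i` (`l 0` the line class, `l i` the exceptional classes). -/
def l (i : Fin 8) : Fin 8 → ℤ := Pi.single i 1

/-- A `(-1)`-class: `D² = -1`, `⟨D, K⟩ = -1`, nonnegative leading coefficient. -/
def IsMinusOneClass (D : Fin 8 → ℤ) : Prop :=
  dpForm D D = -1 ∧ dpForm D dpK = -1 ∧ 0 ≤ D 0

/-- A `(-2)`-class: `F² = -2`, `⟨F, K⟩ = 0`, nonnegative leading coefficient. -/
def IsMinusTwoClass (F : Fin 8 → ℤ) : Prop :=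
  dpForm F F = -2 ∧ dpForm F dpK = 0 ∧ 0 ≤ F 0


lemma dpForm_expand (x y : Fin 8 → ℤ) :
    dpForm x y = x 0 * y 0 - (x 1 * y 1 + x 2 * y 2 + x 3 * y 3 + x 4 * y 4
      + x 5 * y 5 + x 6 * y 6 + x 7 * y 7) := by
  simp only [dpForm, Fin.sum_univ_seven,
    show (Fin.succ 0 : Fin 8) = 1 from rfl, show (Fin.succ 1 : Fin 8) = 2 from rfl,
    show (Fin.succ 2 : Fin 8) = 3 from rfl, show (Fin.succ 3 : Fin 8) = 4 from rfl,
    show (Fin.succ 4 : Fin 8) = 5 from rfl, show (Fin.succ 5 : Fin 8) = 6 from rfl,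
    show (Fin.succ 6 : Fin 8) = 7 from rfl]

lemma dpK_expand (x : Fin 8 → ℤ) :
    dpForm x dpK = -3 * x 0 - (x 1 + x 2 + x 3 + x 4 + x 5 + x 6 + x 7) := by
  rw [dpForm_expand]
  simp only [show dpK 0 = -3 from rfl, show dpK 1 = 1 from rfl, show dpK 2 = 1 from rfl,
    show dpK 3 = 1 from rfl, show dpK 4 = 1 from rfl, show dpK 5 = 1 from rfl,
    show dpK 6 = 1 from rfl, show dpK 7 = 1 from rfl]
  ring

lemma cauchy7 (a b c d e f g : ℤ) :
    (a + b + c + d + e + f + g) ^ 2 ≤ 7 * (a^2 + b^2 + c^2 + d^2 + e^2 + f^2 + g^2) := by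
  nlinarith [sq_nonneg (a-b), sq_nonneg (a-c), sq_nonneg (a-d), sq_nonneg (a-e),
    sq_nonneg (a-f), sq_nonneg (a-g), sq_nonneg (b-c), sq_nonneg (b-d), sq_nonneg (b-e),
    sq_nonneg (b-f), sq_nonneg (b-g), sq_nonneg (c-d), sq_nonneg (c-e), sq_nonneg (c-f),
    sq_nonneg (c-g), sq_nonneg (d-e), sq_nonneg (d-f), sq_nonneg (d-g), sq_nonneg (e-f),
    sq_nonneg (e-g), sq_nonneg (f-g)]

lemma perp_nonpos (v : Fin 8 → ℤ) (hK : dpForm v dpK = 0) :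
    dpForm v v ≤ 0 ∧ (dpForm v v = 0 → v = 0) := by
  rw [dpK_expand] at hK
  have hc := cauchy7 (v 1) (v 2) (v 3) (v 4) (v 5) (v 6) (v 7)
  have hs : v 1 + v 2 + v 3 + v 4 + v 5 + v 6 + v 7 = -3 * v 0 := by linarith
  have hs2 : (v 1 + v 2 + v 3 + v 4 + v 5 + v 6 + v 7) ^ 2 = 9 * v 0 ^ 2 := by
    rw [hs]; ring
  constructor
  · rw [dpForm_expand]
    nlinarith [sq_nonneg (v 0)]
  · intro h0
    have hexp := h0
    rw [dpForm_expand] at hexp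
    have h02 : v 0 ^ 2 ≤ 0 := by nlinarith
    have h00 : v 0 = 0 := by
      have := le_antisymm h02 (sq_nonneg _)
      exact pow_eq_zero_iff two_ne_zero |>.mp this
    have hS : ∑ i : Fin 7, v i.succ * v i.succ = 0 := by
      unfold dpForm at h0
      rw [h00] at h0
      linarith
    have hsucc : ∀ j : Fin 7, v j.succ = 0 := by
      intro j
      have := (Finset.sum_eq_zero_iff_of_nonneg
        (fun i _ => mul_self_nonneg (v i.succ))).mp hS j (Finset.mem_univ j)
      exact mul_self_eq_zero.mp this
    funext i
    exact Fin.cases h00 hsucc i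

lemma minusOne_nonneg (w : Fin 8 → ℤ) (hw : dpForm w w = -1) (hK : dpForm w dpK = -1) :
    0 ≤ w 0 := by
  rw [dpForm_expand] at hw; rw [dpK_expand] at hK
  by_contra hneg
  push_neg at hneg
  have h1 : w 0 ≤ -1 := by omega
  have hc := cauchy7 (w 1) (w 2) (w 3) (w 4) (w 5) (w 6) (w 7)
  have hs : w 1 + w 2 + w 3 + w 4 + w 5 + w 6 + w 7 = 1 - 3 * w 0 := by linarith
  have hs2 : (w 1 + w 2 + w 3 + w 4 + w 5 + w 6 + w 7) ^ 2 = (1 - 3 * w 0) ^ 2 := by rw [hs]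
  nlinarith [sq_nonneg (w 0 + 1)]

/-- Let `F` be a `(-2)`-class and `D₁, D₂` `(-1)`-classes with `⟨D₁,F⟩ = ⟨D₂,F⟩ = 1`.
Then `⟨D₁, D₂⟩ ≤ 1`, with equality iff `D₁ + D₂ = -K - F`; and for each such `D₁`
there is a unique `(-1)`-class `D` with `⟨D, F⟩ = 1` and `⟨D₁, D⟩ = 1`. -/
theorem pairing_near_minusTwoClass (F D1 D2 : Fin 8 → ℤ)
    (hF : IsMinusTwoClass F)
    (h1 : IsMinusOneClass D1) (h2 : IsMinusOneClass D2)
    (h1F : dpForm D1 F = 1) (h2F : dpForm D2 F = 1) :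
    dpForm D1 D2 ≤ 1 ∧
    (dpForm D1 D2 = 1 ↔ D1 + D2 = -dpK - F) ∧
    (∃! D : Fin 8 → ℤ, IsMinusOneClass D ∧ dpForm D F = 1 ∧ dpForm D1 D = 1) := by
  obtain ⟨hF2, hFK, -⟩ := hF
  obtain ⟨h11, h1K, -⟩ := h1
  -- expanded copies
  have hF2' := hF2; have hFK' := hFK; have h11' := h11; have h1K' := h1K; have h1F' := h1F
  rw [dpForm_expand] at hF2' h11' h1F'
  rw [dpK_expand] at hFK' h1K'
  -- the key fact for any admissible E
  have key : ∀ E : Fin 8 → ℤ, IsMinusOneClass E → dpForm E F = 1 →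
      dpForm D1 E ≤ 1 ∧ (dpForm D1 E = 1 → D1 + E = -dpK - F) := by
    intro E hE hEF
    obtain ⟨hE2, hEK, -⟩ := hE
    have hE2' := hE2; have hEK' := hEK; have hEF' := hEF
    rw [dpForm_expand] at hE2' hEF'
    rw [dpK_expand] at hEK'
    have hvK : dpForm (D1 + E + dpK + F) dpK = 0 := by
      rw [dpK_expand]
      simp only [Pi.add_apply, show dpK 0 = -3 from rfl, show dpK 1 = 1 from rfl,
        show dpK 2 = 1 from rfl, show dpK 3 = 1 from rfl, show dpK 4 = 1 from rfl,
        show dpK 5 = 1 from rfl, show dpK 6 = 1 from rfl, show dpK 7 = 1 from rfl]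
      linarith
    have hvv : dpForm (D1 + E + dpK + F) (D1 + E + dpK + F) = 2 * dpForm D1 E - 2 := by
      rw [dpForm_expand, dpForm_expand D1 E]
      simp only [Pi.add_apply, show dpK 0 = -3 from rfl, show dpK 1 = 1 from rfl,
        show dpK 2 = 1 from rfl, show dpK 3 = 1 from rfl, show dpK 4 = 1 from rfl,
        show dpK 5 = 1 from rfl, show dpK 6 = 1 from rfl, show dpK 7 = 1 from rfl]
      linear_combination h11' + hE2' + hF2' + 2 * h1F' + 2 * hEF' + 2 * h1K' + 2 * hEK'
        + 2 * hFK'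
    obtain ⟨hle, heq⟩ := perp_nonpos _ hvK
    constructor
    · linarith [hvv ▸ hle]
    · intro h1E
      have h0 : D1 + E + dpK + F = 0 := heq (by rw [hvv, h1E]; ring)
      funext i
      have := congrFun h0 i
      simp only [Pi.add_apply, Pi.zero_apply] at this
      simp only [Pi.add_apply, Pi.sub_apply, Pi.neg_apply]
      linarith
  obtain ⟨hle2, heq2⟩ := key D2 ⟨h11.symm ▸ h2.1, h2.2.1, h2.2.2⟩ h2F
  refine ⟨hle2, ⟨heq2, ?_⟩, ?_⟩
  · -- converse: D1 + D2 = -K - F → pairing = 1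
    intro hsum
    have h0 : D1 + D2 + dpK + F = 0 := by rw [hsum]; abel
    have hvK : dpForm (D1 + D2 + dpK + F) dpK = 0 := by rw [h0]; simp [dpForm]
    -- reuse hvv computation via key? recompute directly
    obtain ⟨h22, h2K, -⟩ := h2
    have h22' := h22; have h2K' := h2K; have h2F' := h2F
    rw [dpForm_expand] at h22' h2F'
    rw [dpK_expand] at h2K'
    have hvv : dpForm (D1 + D2 + dpK + F) (D1 + D2 + dpK + F) = 2 * dpForm D1 D2 - 2 := by
      rw [dpForm_expand, dpForm_expand D1 D2]
      simp only [Pi.add_apply, show dpK 0 = -3 from rfl, show dpK 1 = 1 from rfl,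
        show dpK 2 = 1 from rfl, show dpK 3 = 1 from rfl, show dpK 4 = 1 from rfl,
        show dpK 5 = 1 from rfl, show dpK 6 = 1 from rfl, show dpK 7 = 1 from rfl]
      linear_combination h11' + h22' + hF2' + 2 * h1F' + 2 * h2F' + 2 * h1K' + 2 * h2K'
        + 2 * hFK'
    rw [h0] at hvv
    rw [show dpForm (0 : Fin 8 → ℤ) 0 = 0 from by simp [dpForm]] at hvv
    linarith
  · -- existence and uniqueness
    have hDD : dpForm (-dpK - F - D1) (-dpK - F - D1) = -1 := by
      rw [dpForm_expand]
      simp only [Pi.sub_apply, Pi.neg_apply, show dpK 0 = -3 from rfl,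
        show dpK 1 = 1 from rfl, show dpK 2 = 1 from rfl, show dpK 3 = 1 from rfl,
        show dpK 4 = 1 from rfl, show dpK 5 = 1 from rfl, show dpK 6 = 1 from rfl,
        show dpK 7 = 1 from rfl]
      linear_combination hF2' + h11' + 2 * h1F' + 2 * h1K' + 2 * hFK'
    have hDK : dpForm (-dpK - F - D1) dpK = -1 := by
      rw [dpK_expand]
      simp only [Pi.sub_apply, Pi.neg_apply, show dpK 0 = -3 from rfl,
        show dpK 1 = 1 from rfl, show dpK 2 = 1 from rfl, show dpK 3 = 1 from rfl,
        show dpK 4 = 1 from rfl, show dpK 5 = 1 from rfl, show dpK 6 = 1 from rfl,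
        show dpK 7 = 1 from rfl]
      linarith
    have hD0 : 0 ≤ (-dpK - F - D1) 0 := minusOne_nonneg _ hDD hDK
    have hDF : dpForm (-dpK - F - D1) F = 1 := by
      rw [dpForm_expand]
      simp only [Pi.sub_apply, Pi.neg_apply, show dpK 0 = -3 from rfl,
        show dpK 1 = 1 from rfl, show dpK 2 = 1 from rfl, show dpK 3 = 1 from rfl,
        show dpK 4 = 1 from rfl, show dpK 5 = 1 from rfl, show dpK 6 = 1 from rfl,
        show dpK 7 = 1 from rfl]
      linear_combination -hFK' - hF2' - h1F'
    have hD1D : dpForm D1 (-dpK - F - D1) = 1 := by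
      rw [dpForm_expand]
      simp only [Pi.sub_apply, Pi.neg_apply, show dpK 0 = -3 from rfl,
        show dpK 1 = 1 from rfl, show dpK 2 = 1 from rfl, show dpK 3 = 1 from rfl,
        show dpK 4 = 1 from rfl, show dpK 5 = 1 from rfl, show dpK 6 = 1 from rfl,
        show dpK 7 = 1 from rfl]
      linear_combination -h1K' - h1F' - h11'
    refine ⟨-dpK - F - D1, ⟨⟨hDD, hDK, hD0⟩, hDF, hD1D⟩, ?_⟩
    rintro D' ⟨hD', hD'F, h1D'⟩
    have hsum := (key D' hD' hD'F).2 h1D'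
    rw [← hsum]; abel
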